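/- arXiv:1711.07625 — 3 statements merged into one kernel-verified Lean document; each statement's English description precedes it below -/
import Mathlib

section
/- If the block matrix [[A, Bᵀ],[B, C]] is positive semidefinite, where A is n×n, C is m×m, and B is m×n real matrices, then the operator norm of B satisfies ‖B‖ ≤ √(‖A‖·‖C‖). -/
open Matrix
open scoped RealInnerProductSpace

noncomputable def singVals {n : ℕ} (M : Matrix (Fin n) (Fin n) ℝ) (i : Fin n) : ℝ :=
  Real.sqrt ((show (Mᵀ * M).IsHermitian by
    simpa using Matrix.isHermitian_conjTranspose_mul_self M).eigenvalues i)

noncomputable def rdist {n : ℕ} (P Q : Matrix (Fin n) (Fin n) ℝ) : ℝ :=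
  Real.sqrt (∑ i, (Real.log (singVals (P * Q⁻¹) i)) ^ 2)

noncomputable def matSpectralNorm {m n : ℕ} (M : Matrix (Fin m) (Fin n) ℝ) : ℝ :=
  ‖(LinearMap.toContinuousLinearMap (Matrix.toEuclideanLin M))‖


lemma key_dot {n m : ℕ} (A : Matrix (Fin n) (Fin n) ℝ) (C : Matrix (Fin m) (Fin m) ℝ)
    (B : Matrix (Fin m) (Fin n) ℝ)
    (h : (Matrix.fromBlocks A Bᵀ B C).PosSemidef)
    (x : Fin n → ℝ) (y : Fin m → ℝ) :
    (y ⬝ᵥ B *ᵥ x)^2 ≤ (x ⬝ᵥ A *ᵥ x) * (y ⬝ᵥ C *ᵥ y) := by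
  have hq : ∀ t : ℝ, 0 ≤ (x ⬝ᵥ A *ᵥ x) * (t * t) + (2 * (y ⬝ᵥ B *ᵥ x)) * t + (y ⬝ᵥ C *ᵥ y) := by
    intro t
    have := h.dotProduct_mulVec_nonneg (Sum.elim (t • x) y)
    simp only [star_trivial, fromBlocks_mulVec, sumElim_dotProduct_sumElim,
      mulVec_smul, dotProduct_add, dotProduct_smul, smul_dotProduct, smul_eq_mul,
      RCLike.re_to_real, Sum.elim_comp_inl, Sum.elim_comp_inr] at this
    have hBt : x ⬝ᵥ Bᵀ *ᵥ y = y ⬝ᵥ B *ᵥ x := by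
      rw [mulVec_transpose, dotProduct_mulVec, dotProduct_comm]
    rw [hBt] at this
    nlinarith [this]
  have := discrim_le_zero hq
  rw [discrim] at this
  nlinarith [this]

lemma inner_toEuc {p q : ℕ} (M : Matrix (Fin p) (Fin q) ℝ)
    (u : EuclideanSpace ℝ (Fin p)) (v : EuclideanSpace ℝ (Fin q)) :
    ⟪u, (LinearMap.toContinuousLinearMap (Matrix.toEuclideanLin M)) v⟫ =
      (WithLp.equiv 2 _ u) ⬝ᵥ M *ᵥ (WithLp.equiv 2 _ v) := by
  simp [Matrix.toEuclideanLin_apply, PiLp.inner_apply, dotProduct, RCLike.inner_apply,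
    mul_comm]

/-- If the block matrix [[A, Bᵀ],[B, C]] is positive semidefinite, then
    the spectral norm of B satisfies ‖B‖ ≤ √(‖A‖·‖C‖). -/
theorem block_psd_offdiag_norm_bound {n m : ℕ}
    (A : Matrix (Fin n) (Fin n) ℝ) (C : Matrix (Fin m) (Fin m) ℝ)
    (B : Matrix (Fin m) (Fin n) ℝ)
    (h : (Matrix.fromBlocks A Bᵀ B C).PosSemidef) :
    matSpectralNorm B ≤ Real.sqrt (matSpectralNorm A * matSpectralNorm C) := by
  have hA0 : 0 ≤ matSpectralNorm A := norm_nonneg _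
  have hC0 : 0 ≤ matSpectralNorm C := norm_nonneg _
  set fA := LinearMap.toContinuousLinearMap (Matrix.toEuclideanLin A) with hfA
  set fC := LinearMap.toContinuousLinearMap (Matrix.toEuclideanLin C) with hfC
  set fB := LinearMap.toContinuousLinearMap (Matrix.toEuclideanLin B) with hfB
  show ‖fB‖ ≤ Real.sqrt (matSpectralNorm A * matSpectralNorm C)
  apply ContinuousLinearMap.opNorm_le_bound _ (Real.sqrt_nonneg _)
  intro u
  set w := fB u with hw
  have hkey : (⟪w, fB u⟫)^2 ≤ ⟪u, fA u⟫ * ⟪w, fC w⟫ := by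
    rw [hfA, hfB, hfC, inner_toEuc, inner_toEuc, inner_toEuc]
    exact key_dot A C B h _ _
  have h1 : ⟪u, fA u⟫ ≤ matSpectralNorm A * ‖u‖^2 := by
    calc ⟪u, fA u⟫ ≤ ‖u‖ * ‖fA u‖ := real_inner_le_norm _ _
    _ ≤ ‖u‖ * (‖fA‖ * ‖u‖) := by
        exact mul_le_mul_of_nonneg_left (fA.le_opNorm u) (norm_nonneg u)
    _ = matSpectralNorm A * ‖u‖^2 := by unfold matSpectralNorm; rw [← hfA]; ring
  have h2 : ⟪w, fC w⟫ ≤ matSpectralNorm C * ‖w‖^2 := by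
    calc ⟪w, fC w⟫ ≤ ‖w‖ * ‖fC w‖ := real_inner_le_norm _ _
    _ ≤ ‖w‖ * (‖fC‖ * ‖w‖) := by
        exact mul_le_mul_of_nonneg_left (fC.le_opNorm w) (norm_nonneg w)
    _ = matSpectralNorm C * ‖w‖^2 := by unfold matSpectralNorm; rw [← hfC]; ring
  have hq0 : 0 ≤ ⟪w, fC w⟫ := by
    rw [hfC, inner_toEuc]
    have := h.dotProduct_mulVec_nonneg (Sum.elim 0 (WithLp.equiv 2 _ w))
    simpa [fromBlocks_mulVec, sumElim_dotProduct_sumElim] using this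
  have hww : ⟪w, fB u⟫ = ‖w‖^2 := by
    rw [← hw]; exact real_inner_self_eq_norm_sq w
  rw [hww] at hkey
  have h4 : (‖w‖^2)^2 ≤ (matSpectralNorm A * ‖u‖^2) * (matSpectralNorm C * ‖w‖^2) :=
    hkey.trans (mul_le_mul h1 h2 hq0 (by positivity))
  rcases eq_or_lt_of_le (norm_nonneg w) with hw0 | hw0
  · rw [← hw0]; positivity
  · have h5 : ‖w‖^2 ≤ matSpectralNorm A * matSpectralNorm C * ‖u‖^2 := by
      have hwsq : (0:ℝ) < ‖w‖^2 := by positivity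
      nlinarith [h4]
    have := Real.sqrt_le_sqrt h5
    rwa [Real.sqrt_sq (norm_nonneg _), Real.sqrt_mul (mul_nonneg hA0 hC0),
      Real.sqrt_sq (norm_nonneg _)] at this
end

section
/- Suppose two sequences of positive definite matrices Σ_k and Σ*_k satisfy δ(Σ_k, Σ*_k) ≤ υ^k · δ(Σ_0, Σ*_0) for some 0 ≤ υ ≤ 1, and suppose Σ*_k ≤ Σ_k for all k. Then ‖Σ_k − Σ*_k‖ ≤ κ·σ·υ^k, where κ = e^{δ(Σ_0, Σ*_0)} − 1 and σ is any uniform upper bound on ‖Σ_k‖ and ‖Σ*_k‖. -/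
open Matrix

section helpers
variable {n : ℕ}

lemma dot_self_mulVec (M : Matrix (Fin n) (Fin n) ℝ) (x : Fin n → ℝ) :
    x ⬝ᵥ (Mᴴ * M) *ᵥ x = (M *ᵥ x) ⬝ᵥ (M *ᵥ x) := by
  rw [conjTranspose_eq_transpose_of_trivial, ← mulVec_mulVec, dotProduct_mulVec x,
    vecMul_transpose]

lemma quad_diag_le {U : Matrix (Fin n) (Fin n) ℝ}
    (hU : U ∈ Matrix.unitaryGroup (Fin n) ℝ) {f : Fin n → ℝ} {c : ℝ}
    (h : ∀ i, f i ≤ c) (x : Fin n → ℝ) :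
    x ⬝ᵥ (U * diagonal f * star U) *ᵥ x ≤ c * (x ⬝ᵥ x) := by
  have hsU : star U = Uᵀ := by
    rw [star_eq_conjTranspose, conjTranspose_eq_transpose_of_trivial]
  have hx : x ᵥ* U = Uᵀ *ᵥ x := (mulVec_transpose U x).symm
  have key : x ⬝ᵥ (U * diagonal f * star U) *ᵥ x
      = ∑ i, f i * ((Uᵀ *ᵥ x) i * (Uᵀ *ᵥ x) i) := by
    rw [hsU, ← mulVec_mulVec, ← mulVec_mulVec, dotProduct_mulVec x, hx]
    simp only [dotProduct, mulVec_diagonal]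
    exact Finset.sum_congr rfl fun i _ => by ring
  have key2 : x ⬝ᵥ x = ∑ i, ((Uᵀ *ᵥ x) i * (Uᵀ *ᵥ x) i) := by
    have h1 : (Uᵀ *ᵥ x) ⬝ᵥ (Uᵀ *ᵥ x) = x ⬝ᵥ (U * Uᵀ) *ᵥ x := by
      rw [← mulVec_mulVec, dotProduct_mulVec x, hx]
    have h2 : U * Uᵀ = 1 := by
      rw [← hsU]; exact mem_unitaryGroup_iff.mp hU
    rw [h2, one_mulVec] at h1
    rw [← h1]; rfl
  rw [key, key2, Finset.mul_sum]
  exact Finset.sum_le_sum fun i _ => mul_le_mul_of_nonneg_right (h i) (mul_self_nonneg _)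

lemma quad_form_le {A : Matrix (Fin n) (Fin n) ℝ} (hA : A.IsHermitian)
    {c : ℝ} (h : ∀ i, hA.eigenvalues i ≤ c) (x : Fin n → ℝ) :
    x ⬝ᵥ A *ᵥ x ≤ c * (x ⬝ᵥ x) := by
  have hsp := hA.spectral_theorem
  rw [RCLike.ofReal_real_eq_id, Function.id_comp] at hsp
  conv_lhs => rw [hsp]
  exact quad_diag_le hA.eigenvectorUnitary.2 h x

lemma herm_sq_decomp {A : Matrix (Fin n) (Fin n) ℝ} (hA : A.IsHermitian) :
    A * A = hA.eigenvectorUnitary.1 * diagonal (fun i => hA.eigenvalues i * hA.eigenvalues i) *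
      star hA.eigenvectorUnitary.1 := by
  have hsp := hA.spectral_theorem
  rw [RCLike.ofReal_real_eq_id, Function.id_comp] at hsp
  simp only [Unitary.conjStarAlgAut_apply, Unitary.coe_star] at hsp
  have hU : star hA.eigenvectorUnitary.1 * hA.eigenvectorUnitary.1 = 1 :=
    mem_unitaryGroup_iff'.mp hA.eigenvectorUnitary.2
  conv_lhs => rw [hsp]
  set U := hA.eigenvectorUnitary.1
  set D := diagonal hA.eigenvalues
  have h1 : (U * D * star U) * (U * D * star U) = U * (D * (star U * U) * D) * star U := by
    noncomm_ring
  rw [h1, hU, Matrix.mul_one, diagonal_mul_diagonal]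


lemma euclid_norm_sq (z : EuclideanSpace ℝ (Fin n)) : ‖z‖ ^ 2 = ⇑z ⬝ᵥ ⇑z := by
  rw [EuclideanSpace.norm_eq, Real.sq_sqrt (by positivity)]
  simp [dotProduct, Real.norm_eq_abs, sq, abs_mul_abs_self]

lemma spectralNorm_le_of {M : Matrix (Fin n) (Fin n) ℝ} {c : ℝ} (hc : 0 ≤ c)
    (h : ∀ x : Fin n → ℝ, (M *ᵥ x) ⬝ᵥ (M *ᵥ x) ≤ c ^ 2 * (x ⬝ᵥ x)) :
    matSpectralNorm M ≤ c := by
  refine ContinuousLinearMap.opNorm_le_bound _ hc fun x => ?_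
  have h1 : ‖(LinearMap.toContinuousLinearMap (Matrix.toEuclideanLin M)) x‖ ^ 2
      ≤ (c * ‖x‖) ^ 2 := by
    have e1 : (LinearMap.toContinuousLinearMap (Matrix.toEuclideanLin M)) x
        = (WithLp.equiv 2 (Fin n → ℝ)).symm (M *ᵥ ⇑x) := rfl
    rw [e1, euclid_norm_sq]
    have e2 : ⇑((WithLp.equiv 2 (Fin n → ℝ)).symm (M *ᵥ ⇑x)) = M *ᵥ ⇑x := rfl
    rw [e2]
    calc (M *ᵥ ⇑x) ⬝ᵥ (M *ᵥ ⇑x) ≤ c ^ 2 * (⇑x ⬝ᵥ ⇑x) := h ⇑x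
      _ = (c * ‖x‖) ^ 2 := by rw [← euclid_norm_sq]; ring
  calc ‖(LinearMap.toContinuousLinearMap (Matrix.toEuclideanLin M)) x‖
      = Real.sqrt (‖(LinearMap.toContinuousLinearMap (Matrix.toEuclideanLin M)) x‖ ^ 2) :=
        (Real.sqrt_sq (norm_nonneg _)).symm
    _ ≤ Real.sqrt ((c * ‖x‖) ^ 2) := Real.sqrt_le_sqrt h1
    _ = c * ‖x‖ := Real.sqrt_sq (by positivity)

lemma eig_le_spectralNorm {A : Matrix (Fin n) (Fin n) ℝ} (hA : A.IsHermitian) (i : Fin n) :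
    hA.eigenvalues i ≤ matSpectralNorm A := by
  have hv : ‖hA.eigenvectorBasis i‖ = 1 := hA.eigenvectorBasis.orthonormal.1 i
  have happ : (LinearMap.toContinuousLinearMap (Matrix.toEuclideanLin A)) (hA.eigenvectorBasis i)
      = (WithLp.equiv 2 (Fin n → ℝ)).symm (hA.eigenvalues i • ⇑(hA.eigenvectorBasis i)) := by
    show (WithLp.equiv 2 (Fin n → ℝ)).symm (A *ᵥ ⇑(hA.eigenvectorBasis i)) = _
    rw [hA.mulVec_eigenvectorBasis]
  have hle := (LinearMap.toContinuousLinearMap (Matrix.toEuclideanLin A)).le_opNorm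
    (hA.eigenvectorBasis i)
  rw [happ, hv, mul_one] at hle
  have hn : ‖(WithLp.equiv 2 (Fin n → ℝ)).symm (hA.eigenvalues i • ⇑(hA.eigenvectorBasis i))‖
      = |hA.eigenvalues i| := by
    have : (WithLp.equiv 2 (Fin n → ℝ)).symm (hA.eigenvalues i • ⇑(hA.eigenvectorBasis i))
        = hA.eigenvalues i • hA.eigenvectorBasis i := rfl
    rw [this, norm_smul, hv, mul_one, Real.norm_eq_abs]
  rw [hn] at hle
  exact (le_abs_self _).trans hle

lemma herm_norm_le {A : Matrix (Fin n) (Fin n) ℝ} (hA : A.IsHermitian) {c : ℝ}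
    (hc : 0 ≤ c) (h : ∀ i, |hA.eigenvalues i| ≤ c) : matSpectralNorm A ≤ c := by
  apply spectralNorm_le_of hc
  intro x
  have e1 : (A *ᵥ x) ⬝ᵥ (A *ᵥ x) = x ⬝ᵥ (A * A) *ᵥ x := by
    rw [← dot_self_mulVec, hA.eq]
  rw [e1, herm_sq_decomp hA]
  have hb : ∀ i, hA.eigenvalues i * hA.eigenvalues i ≤ c ^ 2 := by
    intro i
    have e2 : hA.eigenvalues i * hA.eigenvalues i = |hA.eigenvalues i| ^ 2 := by
      rw [sq_abs]; ring
    rw [e2]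
    exact pow_le_pow_left₀ (abs_nonneg _) (h i) 2
  exact quad_diag_le hA.eigenvectorUnitary.2 hb x


open scoped MatrixOrder in
lemma exists_psd_sqrt {A : Matrix (Fin n) (Fin n) ℝ} (hA : A.PosSemidef) :
    ∃ R : Matrix (Fin n) (Fin n) ℝ, R.PosSemidef ∧ R * R = A :=
  ⟨CFC.sqrt A, (CFC.sqrt_nonneg A).posSemidef, CFC.sqrt_mul_sqrt_self A hA.nonneg⟩

lemma dot_self_nonneg (x : Fin n → ℝ) : 0 ≤ x ⬝ᵥ x :=
  Finset.sum_nonneg fun j _ => mul_self_nonneg _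

lemma exp_convex_aux {d t : ℝ} (ht0 : 0 ≤ t) (ht1 : t ≤ 1) :
    Real.exp (t * d) - 1 ≤ (Real.exp d - 1) * t := by
  have h := convexOn_exp.2 (Set.mem_univ (0:ℝ)) (Set.mem_univ d)
    (by linarith : (0:ℝ) ≤ 1 - t) ht0 (by ring)
  simp only [smul_eq_mul, mul_zero, zero_add, Real.exp_zero, mul_one] at h
  linarith

end helpers

/-- If δ(Σ_k, Σ*_k) ≤ υ^k δ(Σ_0, Σ*_0) with 0 ≤ υ ≤ 1 and Σ*_k ≤ Σ_k, then
    ‖Σ_k − Σ*_k‖ ≤ κσυ^k with κ = e^{δ(Σ_0,Σ*_0)} − 1 and σ a uniform bound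
    on ‖Σ_k‖, ‖Σ*_k‖. -/
theorem cov_diff_exponential_bound {n : ℕ}
    (S Ss : ℕ → Matrix (Fin n) (Fin n) ℝ)
    (hS : ∀ k, (S k).PosDef) (hSs : ∀ k, (Ss k).PosDef)
    (v sig : ℝ) (hv0 : 0 ≤ v) (hv1 : v ≤ 1)
    (hd : ∀ k, rdist (S k) (Ss k) ≤ v ^ k * rdist (S 0) (Ss 0))
    (hle : ∀ k, (S k - Ss k).PosSemidef)
    (hsig : ∀ k, matSpectralNorm (S k) ≤ sig ∧ matSpectralNorm (Ss k) ≤ sig) :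
    ∀ k, matSpectralNorm (S k - Ss k) ≤
      (Real.exp (rdist (S 0) (Ss 0)) - 1) * sig * v ^ k := by
  intro k
  have hQ := hSs k
  have hP := hS k
  have hd0 : 0 ≤ rdist (S k) (Ss k) := Real.sqrt_nonneg _
  have hd00 : 0 ≤ rdist (S 0) (Ss 0) := Real.sqrt_nonneg _
  have hexp1 : (1:ℝ) ≤ Real.exp (rdist (S k) (Ss k)) := Real.one_le_exp hd0
  have hsig0 : 0 ≤ sig := le_trans (norm_nonneg _) (hsig 0).1
  -- Step A : singular values of M := S k * (Ss k)⁻¹ are bounded by exp δ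
  have hsv : ∀ i, singVals (S k * (Ss k)⁻¹) i ≤ Real.exp (rdist (S k) (Ss k)) := by
    intro i
    rcases le_or_gt (singVals (S k * (Ss k)⁻¹) i) 1 with h1 | h1
    · exact h1.trans hexp1
    · have hlog2 : (Real.log (singVals (S k * (Ss k)⁻¹) i)) ^ 2
          ≤ (rdist (S k) (Ss k)) ^ 2 := by
        rw [rdist, Real.sq_sqrt (by positivity)]
        exact Finset.single_le_sum (f := fun j => (Real.log (singVals (S k * (Ss k)⁻¹) j)) ^ 2)
          (fun j _ => sq_nonneg _) (Finset.mem_univ i)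
      have hlog : Real.log (singVals (S k * (Ss k)⁻¹) i) ≤ rdist (S k) (Ss k) := by
        have h2 := Real.sqrt_le_sqrt hlog2
        rwa [Real.sqrt_sq (Real.log_nonneg h1.le), Real.sqrt_sq hd0] at h2
      calc singVals (S k * (Ss k)⁻¹) i
          = Real.exp (Real.log (singVals (S k * (Ss k)⁻¹) i)) :=
            (Real.exp_log (zero_lt_one.trans h1)).symm
        _ ≤ Real.exp (rdist (S k) (Ss k)) := Real.exp_le_exp.2 hlog
  -- quadratic bound for M
  have hMM : ∀ z : Fin n → ℝ, ((S k * (Ss k)⁻¹) *ᵥ z) ⬝ᵥ ((S k * (Ss k)⁻¹) *ᵥ z)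
      ≤ (Real.exp (rdist (S k) (Ss k))) ^ 2 * (z ⬝ᵥ z) := by
    intro z
    rw [← dot_self_mulVec]
    apply quad_form_le (isHermitian_conjTranspose_mul_self _)
    intro i
    have h1 : (isHermitian_conjTranspose_mul_self (S k * (Ss k)⁻¹)).eigenvalues i
        = (singVals (S k * (Ss k)⁻¹) i) ^ 2 := by
      rw [singVals]
      exact (Real.sq_sqrt ((posSemidef_conjTranspose_mul_self _).eigenvalues_nonneg i)).symm
    rw [h1]
    exact pow_le_pow_left₀ (Real.sqrt_nonneg _) (hsv i) 2
  -- square root of Q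
  have hQps := hQ.posSemidef
  obtain ⟨R, hRps, hRmul'⟩ := exists_psd_sqrt hQps
  have hRH : Rᴴ = R := hRps.1
  have hRmul : R * R = Ss k := hRmul'
  have hRdet : IsUnit R.det := by
    have h1 : R.det * R.det = (Ss k).det := by rw [← det_mul, hRmul]
    have h2 : (Ss k).det ≠ 0 := ne_of_gt hQ.det_pos
    exact isUnit_iff_ne_zero.2 fun h => h2 (by rw [← h1, h, zero_mul])
  have hRinv1 : R⁻¹ * R = 1 := nonsing_inv_mul R hRdet
  have hRinv2 : R * R⁻¹ = 1 := mul_nonsing_inv R hRdet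
  have hRinvH : R⁻¹ᴴ = R⁻¹ := by rw [conjTranspose_nonsing_inv, hRH]
  have hRT : Rᵀ = R := by rw [← conjTranspose_eq_transpose_of_trivial, hRH]
  set A' := R⁻¹ * S k * R⁻¹ with hA'def
  have hA'ps : A'.PosSemidef := by
    have h1 := hP.posSemidef.mul_mul_conjTranspose_same R⁻¹
    rwa [hRinvH] at h1
  have hPA : S k = R * A' * R := by
    have h1 : R * (R⁻¹ * S k * R⁻¹) * R = (R * R⁻¹) * S k * (R⁻¹ * R) := by
      noncomm_ring
    rw [hA'def, h1, hRinv1, hRinv2, one_mul, mul_one]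
  -- eigenvalues of A' are bounded by exp δ
  have hA'eig : ∀ i, hA'ps.1.eigenvalues i ≤ Real.exp (rdist (S k) (Ss k)) := by
    intro i
    have heig : A' *ᵥ ⇑(hA'ps.1.eigenvectorBasis i)
        = hA'ps.1.eigenvalues i • ⇑(hA'ps.1.eigenvectorBasis i) :=
      hA'ps.1.mulVec_eigenvectorBasis i
    set w : Fin n → ℝ := ⇑(hA'ps.1.eigenvectorBasis i) with hwdef
    have hww : w ⬝ᵥ w = 1 := by
      have h1 : ‖hA'ps.1.eigenvectorBasis i‖ = 1 := hA'ps.1.eigenvectorBasis.orthonormal.1 i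
      have h2 := euclid_norm_sq (hA'ps.1.eigenvectorBasis i)
      rw [h1] at h2
      rw [← hwdef] at h2
      linarith
    set z := R *ᵥ w with hz
    have hzne : z ≠ 0 := by
      intro h
      have h1 : (R⁻¹ * R) *ᵥ w = R⁻¹ *ᵥ z := by rw [← mulVec_mulVec]
      rw [hRinv1, one_mulVec, h, mulVec_zero] at h1
      rw [h1] at hww
      simp [dotProduct] at hww
    have hMz : (S k * (Ss k)⁻¹) *ᵥ z = hA'ps.1.eigenvalues i • z := by
      have hQinv : (Ss k)⁻¹ = R⁻¹ * R⁻¹ := by rw [← hRmul, Matrix.mul_inv_rev]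
      have hMR : S k * (Ss k)⁻¹ * R = R * A' := by
        rw [hQinv, hA'def]
        have h1 : S k * (R⁻¹ * R⁻¹) * R = S k * R⁻¹ * (R⁻¹ * R) := by noncomm_ring
        have h2 : R * (R⁻¹ * S k * R⁻¹) = (R * R⁻¹) * (S k * R⁻¹) := by noncomm_ring
        rw [h1, hRinv1, mul_one, h2, hRinv2, one_mul]
      rw [hz, mulVec_mulVec, hMR, ← mulVec_mulVec, heig, mulVec_smul]
    have hq := hMM z
    rw [hMz] at hq
    have hsm : (hA'ps.1.eigenvalues i • z) ⬝ᵥ (hA'ps.1.eigenvalues i • z)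
        = (hA'ps.1.eigenvalues i) ^ 2 * (z ⬝ᵥ z) := by
      rw [smul_dotProduct, dotProduct_smul, smul_eq_mul, smul_eq_mul]; ring
    rw [hsm] at hq
    have hzpos : 0 < z ⬝ᵥ z :=
      lt_of_le_of_ne (dot_self_nonneg z) (Ne.symm (fun h => hzne (dotProduct_self_eq_zero.mp h)))
    have hsq : (hA'ps.1.eigenvalues i) ^ 2 ≤ (Real.exp (rdist (S k) (Ss k))) ^ 2 :=
      le_of_mul_le_mul_right (by linarith) hzpos
    have hev0 : 0 ≤ hA'ps.1.eigenvalues i := hA'ps.eigenvalues_nonneg i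
    nlinarith [Real.exp_pos (rdist (S k) (Ss k))]
  -- quadratic comparison  xᵀ P x ≤ exp δ · xᵀ Q x
  have hquadPQ : ∀ x : Fin n → ℝ,
      x ⬝ᵥ (S k) *ᵥ x ≤ Real.exp (rdist (S k) (Ss k)) * (x ⬝ᵥ (Ss k) *ᵥ x) := by
    intro x
    have hvm : x ᵥ* R = R *ᵥ x := by rw [← hRT, mulVec_transpose, hRT]
    have h1 : x ⬝ᵥ (S k) *ᵥ x = (R *ᵥ x) ⬝ᵥ A' *ᵥ (R *ᵥ x) := by
      conv_lhs => rw [hPA]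
      rw [← mulVec_mulVec, ← mulVec_mulVec, dotProduct_mulVec x, hvm]
    have h2 : (R *ᵥ x) ⬝ᵥ (R *ᵥ x) = x ⬝ᵥ (Ss k) *ᵥ x := by
      rw [← dot_self_mulVec, hRH, hRmul]
    calc x ⬝ᵥ (S k) *ᵥ x = (R *ᵥ x) ⬝ᵥ A' *ᵥ (R *ᵥ x) := h1
      _ ≤ Real.exp (rdist (S k) (Ss k)) * ((R *ᵥ x) ⬝ᵥ (R *ᵥ x)) :=
          quad_form_le hA'ps.1 hA'eig _
      _ = Real.exp (rdist (S k) (Ss k)) * (x ⬝ᵥ (Ss k) *ᵥ x) := by rw [h2]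
  -- quadratic bound for Q
  have hQquad : ∀ x : Fin n → ℝ, x ⬝ᵥ (Ss k) *ᵥ x ≤ sig * (x ⬝ᵥ x) := by
    intro x
    calc x ⬝ᵥ (Ss k) *ᵥ x ≤ matSpectralNorm (Ss k) * (x ⬝ᵥ x) :=
        quad_form_le hQ.1 (fun i => eig_le_spectralNorm hQ.1 i) x
      _ ≤ sig * (x ⬝ᵥ x) := mul_le_mul_of_nonneg_right (hsig k).2 (dot_self_nonneg x)
  -- eigenvalue bound for the difference
  have hD := hle k
  have hDeig : ∀ i, |hD.1.eigenvalues i| ≤ (Real.exp (rdist (S k) (Ss k)) - 1) * sig := by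
    intro i
    have hev0 : 0 ≤ hD.1.eigenvalues i := hD.eigenvalues_nonneg i
    rw [abs_of_nonneg hev0]
    have heig : (S k - Ss k) *ᵥ ⇑(hD.1.eigenvectorBasis i)
        = hD.1.eigenvalues i • ⇑(hD.1.eigenvectorBasis i) :=
      hD.1.mulVec_eigenvectorBasis i
    set w : Fin n → ℝ := ⇑(hD.1.eigenvectorBasis i) with hwdef
    have hww : w ⬝ᵥ w = 1 := by
      have h1 : ‖hD.1.eigenvectorBasis i‖ = 1 := hD.1.eigenvectorBasis.orthonormal.1 i
      have h2 := euclid_norm_sq (hD.1.eigenvectorBasis i)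
      rw [h1] at h2
      rw [← hwdef] at h2
      linarith
    have h1 : hD.1.eigenvalues i = w ⬝ᵥ (S k) *ᵥ w - w ⬝ᵥ (Ss k) *ᵥ w := by
      have h2 := congrArg (fun u => w ⬝ᵥ u) heig
      simp only [sub_mulVec, dotProduct_sub, dotProduct_smul, smul_eq_mul] at h2
      rw [hww, mul_one] at h2
      linarith
    have h2 := hquadPQ w
    have h3 := hQquad w
    rw [hww, mul_one] at h3
    have h4 : (0:ℝ) ≤ Real.exp (rdist (S k) (Ss k)) - 1 := by linarith
    nlinarith
  have hnorm : matSpectralNorm (S k - Ss k) ≤ (Real.exp (rdist (S k) (Ss k)) - 1) * sig :=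
    herm_norm_le hD.1 (mul_nonneg (by linarith) hsig0) hDeig
  -- convexity step
  have ht0 : 0 ≤ v ^ k := pow_nonneg hv0 k
  have ht1 : v ^ k ≤ 1 := pow_le_one₀ hv0 hv1
  have hconv : Real.exp (rdist (S k) (Ss k)) - 1
      ≤ (Real.exp (rdist (S 0) (Ss 0)) - 1) * v ^ k := by
    have h1 : Real.exp (rdist (S k) (Ss k)) ≤ Real.exp (v ^ k * rdist (S 0) (Ss 0)) :=
      Real.exp_le_exp.2 (hd k)
    have h2 := exp_convex_aux (d := rdist (S 0) (Ss 0)) ht0 ht1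
    linarith
  calc matSpectralNorm (S k - Ss k) ≤ (Real.exp (rdist (S k) (Ss k)) - 1) * sig := hnorm
    _ ≤ ((Real.exp (rdist (S 0) (Ss 0)) - 1) * v ^ k) * sig :=
        mul_le_mul_of_nonneg_right hconv hsig0
    _ = (Real.exp (rdist (S 0) (Ss 0)) - 1) * sig * v ^ k := by ring
end

section
/- Consider the Riccati difference equation Σ_{k+1} = A(Σ_k − Σ_k Cᵀ(CΣ_kCᵀ + R)⁻¹CΣ_k)Aᵀ + Q with R > 0, Q ≥ 0, and two solutions Σ_k, Σ'_k with initial values Σ_0 ≤ Σ'_0 (Loewner order). Then Σ_k ≤ Σ'_k for all k ≥ 0 (monotonicity of the Riccati recursion in its initial condition). -/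
open Matrix

/-- Conjugation of a PSD matrix by any real matrix is PSD. -/
private lemma psd_conj {m n : ℕ} (X : Matrix (Fin m) (Fin n) ℝ)
    {P : Matrix (Fin n) (Fin n) ℝ} (hP : P.PosSemidef) :
    (X * P * Xᵀ).PosSemidef := by
  simpa [Matrix.conjTranspose_eq_transpose_of_trivial] using hP.mul_mul_conjTranspose_same X

/-- Completion-of-squares identity for the measurement update. -/
private lemma key_identity {n p : ℕ} (P : Matrix (Fin n) (Fin n) ℝ)
    (C : Matrix (Fin p) (Fin n) ℝ) (R M N : Matrix (Fin p) (Fin p) ℝ)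
    (K : Matrix (Fin n) (Fin p) ℝ)
    (hP : Pᵀ = P) (hN : Nᵀ = N) (hMN : M * N = 1) (hNM : N * M = 1)
    (hM : C * P * Cᵀ + R = M) :
    (1 - K * C) * P * (1 - K * C)ᵀ + K * R * Kᵀ =
      (P - P * Cᵀ * N * C * P) + (K - P * Cᵀ * N) * M * (K - P * Cᵀ * N)ᵀ := by
  have hR : R = M - C * P * Cᵀ := by rw [← hM]; abel
  have e1 : (K - P * Cᵀ * N) * M = K * M - P * Cᵀ := by
    rw [Matrix.sub_mul, Matrix.mul_assoc (P * Cᵀ), hNM, Matrix.mul_one]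
  have e2 : (K - P * Cᵀ * N)ᵀ = Kᵀ - N * (C * P) := by
    simp [transpose_sub, transpose_mul, hP, hN, Matrix.mul_assoc]
  have e3 : K * M * (N * (C * P)) = K * (C * P) := by
    rw [Matrix.mul_assoc K M, ← Matrix.mul_assoc M N, hMN, Matrix.one_mul]
  rw [e2, e1]
  simp only [Matrix.sub_mul, Matrix.mul_sub]
  rw [e3, hR, transpose_sub, transpose_mul, transpose_one]
  simp only [Matrix.sub_mul, Matrix.mul_sub, Matrix.one_mul, Matrix.mul_one, Matrix.mul_assoc]
  abel

section Step
variable {n p : ℕ} (C : Matrix (Fin p) (Fin n) ℝ) {R : Matrix (Fin p) (Fin p) ℝ}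

private lemma innov_posDef (hR : R.PosDef) {P : Matrix (Fin n) (Fin n) ℝ}
    (hP : P.PosSemidef) : (C * P * Cᵀ + R).PosDef :=
  Matrix.PosDef.posSemidef_add (psd_conj C hP) hR

private lemma facts (hR : R.PosDef) {P : Matrix (Fin n) (Fin n) ℝ} (hP : P.PosSemidef) :
    (C * P * Cᵀ + R) * (C * P * Cᵀ + R)⁻¹ = 1 ∧
    (C * P * Cᵀ + R)⁻¹ * (C * P * Cᵀ + R) = 1 ∧
    ((C * P * Cᵀ + R)⁻¹)ᵀ = (C * P * Cᵀ + R)⁻¹ := by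
  set M := C * P * Cᵀ + R with hMdef
  have hM : M.PosDef := innov_posDef C hR hP
  have hdet : IsUnit M.det := (isUnit_iff_isUnit_det M).mp hM.isUnit
  have hMs : Mᵀ = M := by
    have := hM.isHermitian
    rwa [Matrix.IsHermitian, Matrix.conjTranspose_eq_transpose_of_trivial] at this
  refine ⟨M.mul_nonsing_inv hdet, M.nonsing_inv_mul hdet, ?_⟩
  rw [Matrix.transpose_nonsing_inv, hMs]

/-- The measurement-updated covariance, expressed as a sum of PSD conjugations. -/
private lemma g_eq (hR : R.PosDef) {P : Matrix (Fin n) (Fin n) ℝ} (hP : P.PosSemidef)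
    (K : Matrix (Fin n) (Fin p) ℝ) :
    (1 - K * C) * P * (1 - K * C)ᵀ + K * R * Kᵀ =
      (P - P * Cᵀ * (C * P * Cᵀ + R)⁻¹ * C * P) +
        (K - P * Cᵀ * (C * P * Cᵀ + R)⁻¹) * (C * P * Cᵀ + R) *
          (K - P * Cᵀ * (C * P * Cᵀ + R)⁻¹)ᵀ := by
  obtain ⟨hMN, hNM, hNs⟩ := facts C hR hP
  have hPs : Pᵀ = P := by
    have := hP.isHermitian
    rwa [Matrix.IsHermitian, Matrix.conjTranspose_eq_transpose_of_trivial] at this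
  exact key_identity P C R _ _ K hPs hNs hMN hNM rfl

/-- The measurement update preserves positive semidefiniteness. -/
private lemma g_psd (hR : R.PosDef) {P : Matrix (Fin n) (Fin n) ℝ} (hP : P.PosSemidef) :
    (P - P * Cᵀ * (C * P * Cᵀ + R)⁻¹ * C * P).PosSemidef := by
  have h := g_eq C hR hP (P * Cᵀ * (C * P * Cᵀ + R)⁻¹)
  simp only [sub_self, Matrix.zero_mul, transpose_zero, Matrix.mul_zero, add_zero] at h
  rw [← h]
  exact (psd_conj _ hP).add (psd_conj _ hR.posSemidef)

/-- Monotonicity of the measurement update in the Loewner order. -/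
private lemma g_mono (hR : R.PosDef) {P P' : Matrix (Fin n) (Fin n) ℝ}
    (hP : P.PosSemidef) (hP' : P'.PosSemidef) (hd : (P' - P).PosSemidef) :
    ((P' - P' * Cᵀ * (C * P' * Cᵀ + R)⁻¹ * C * P') -
      (P - P * Cᵀ * (C * P * Cᵀ + R)⁻¹ * C * P)).PosSemidef := by
  set K := P' * Cᵀ * (C * P' * Cᵀ + R)⁻¹ with hK
  -- identity for P' at its optimal gain: correction term vanishes
  have h' := g_eq C hR hP' K
  rw [show K - P' * Cᵀ * (C * P' * Cᵀ + R)⁻¹ = 0 from sub_self K] at h'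
  simp only [sub_self, Matrix.zero_mul, transpose_zero, Matrix.mul_zero, add_zero] at h'
  -- identity for P at gain K
  have h := g_eq C hR hP K
  have key : (P' - P' * Cᵀ * (C * P' * Cᵀ + R)⁻¹ * C * P') -
      (P - P * Cᵀ * (C * P * Cᵀ + R)⁻¹ * C * P) =
      (1 - K * C) * (P' - P) * (1 - K * C)ᵀ +
        (K - P * Cᵀ * (C * P * Cᵀ + R)⁻¹) * (C * P * Cᵀ + R) *
          (K - P * Cᵀ * (C * P * Cᵀ + R)⁻¹)ᵀ := by
    have hb := eq_sub_of_add_eq h.symm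
    rw [← h', hb]
    simp only [Matrix.mul_sub, Matrix.sub_mul]
    abel
  rw [key]
  exact (psd_conj _ hd).add
    (psd_conj _ (innov_posDef C hR hP).posSemidef)

end Step

/-- Monotonicity of the Riccati difference recursion in the initial condition:
    if Σ_0 ≤ Σ'_0 in the Loewner order then Σ_k ≤ Σ'_k for all k. -/
theorem riccati_monotone {n p : ℕ}
    (A : Matrix (Fin n) (Fin n) ℝ) (C : Matrix (Fin p) (Fin n) ℝ)
    (Q : Matrix (Fin n) (Fin n) ℝ) (R : Matrix (Fin p) (Fin p) ℝ)
    (hQ : Q.PosSemidef) (hR : R.PosDef)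
    (S S' : ℕ → Matrix (Fin n) (Fin n) ℝ)
    (hS0 : (S 0).PosSemidef) (hS0' : (S' 0).PosSemidef)
    (hrec : ∀ k, S (k + 1) =
      A * (S k - S k * Cᵀ * (C * S k * Cᵀ + R)⁻¹ * C * S k) * Aᵀ + Q)
    (hrec' : ∀ k, S' (k + 1) =
      A * (S' k - S' k * Cᵀ * (C * S' k * Cᵀ + R)⁻¹ * C * S' k) * Aᵀ + Q)
    (hinit : (S' 0 - S 0).PosSemidef) :
    ∀ k, (S' k - S k).PosSemidef := by
  have main : ∀ k, (S k).PosSemidef ∧ (S' k).PosSemidef ∧ (S' k - S k).PosSemidef := by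
    intro k
    induction k with
    | zero => exact ⟨hS0, hS0', hinit⟩
    | succ k ih =>
      obtain ⟨h1, h2, h3⟩ := ih
      refine ⟨?_, ?_, ?_⟩
      · rw [hrec k]
        exact (psd_conj A (g_psd C hR h1)).add hQ
      · rw [hrec' k]
        exact (psd_conj A (g_psd C hR h2)).add hQ
      · have e : S' (k + 1) - S (k + 1) =
            A * ((S' k - S' k * Cᵀ * (C * S' k * Cᵀ + R)⁻¹ * C * S' k) -
              (S k - S k * Cᵀ * (C * S k * Cᵀ + R)⁻¹ * C * S k)) * Aᵀ := by
          rw [hrec k, hrec' k]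
          simp only [Matrix.mul_sub, Matrix.sub_mul]
          abel
        rw [e]
        exact psd_conj A (g_mono C hR h1 h2 h3)
  exact fun k => (main k).2.2
end
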